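/- arXiv:0711.3009 — 2 statements merged into one kernel-verified Lean document; each statement's English description precedes it below -/
import Mathlib

section
/- Fix an integer i ≥ 2 and integers m_1, …, m_{i−1} ≥ 1. Then λ(R_{(m_1,…,m_{i−1},m_i)}) → λ(R_{(m_1,…,m_{i−1})}) as m_i → ∞; that is, for every ε > 0 there exists an integer M such that for all integers m_i ≥ M, |λ(R_{(m_1,…,m_{i−1},m_i)}) − λ(R_{(m_1,…,m_{i−1})})| < ε. -/
open Polynomial

/-- The polynomials `R_{(m_1, …, m_i)}` of Kin–Takasawa (the sequence `m` is indexed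
starting from `1`; the value at `0` is a dummy): `R_{(m_1)}(t) = t^{m_1+1}(t-1) - 2t`
and `R_{(m_1,…,m_i)}(t) = t^{m_i}(t-1) R_{(m_1,…,m_{i-1})}(t)
+ (-1)^i 2t (R_{(m_1,…,m_{i-1})})_*(t)` for `i ≥ 2`, where `f_*` is the reciprocal
polynomial `t^(deg f) f(1/t)`, i.e. `Polynomial.reverse`. -/
noncomputable def Rpoly (m : ℕ → ℕ) : ℕ → Polynomial ℤ
  | 0 => 1
  | 1 => X ^ (m 1 + 1) * (X - 1) - 2 * X
  | (i + 2) => X ^ (m (i + 2)) * (X - 1) * Rpoly m (i + 1)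
      + (-1 : Polynomial ℤ) ^ (i + 2) * (2 * X) * (Rpoly m (i + 1)).reverse

/-- The polynomial `P_{(m_1, …, m_{k+1})}(t) = t^{m_{k+1}} R_{(m_1,…,m_k)}(t)
+ (-1)^{k+1} (R_{(m_1,…,m_k)})_*(t)`, whose largest root is the dilatation of the
pseudo-Anosov braid `β_{(m_1,…,m_{k+1})}`. -/
noncomputable def Ppoly (m : ℕ → ℕ) (k : ℕ) : Polynomial ℤ :=
  X ^ (m (k + 1)) * Rpoly m k + (-1 : Polynomial ℤ) ^ (k + 1) * (Rpoly m k).reverse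

/-- For an integer polynomial `f`, the maximal absolute value of its complex roots. -/
noncomputable def maxRootAbs (f : Polynomial ℤ) : ℝ :=
  sSup ((fun z : ℂ => ‖z‖) '' {z : ℂ | Polynomial.aeval z f = 0})

/-- The complex absolute value, as an absolute value (compatibility). -/
noncomputable def Complex.abs : AbsoluteValue ℂ ℝ where
  toFun z := ‖z‖
  map_mul' := norm_mul
  nonneg' := norm_nonneg
  eq_zero' _ := norm_eq_zero
  add_le' := norm_add_le

lemma Complex.norm_eq_abs (z : ℂ) : ‖z‖ = Complex.abs z := rfl

lemma Complex.abs_two : Complex.abs 2 = 2 := by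
  rw [← Complex.norm_eq_abs]; norm_num

lemma Complex.continuous_abs : Continuous Complex.abs := continuous_norm

lemma Complex.dist_eq_abs (z w : ℂ) : dist z w = Complex.abs (z - w) := Complex.dist_eq z w

open Metric

lemma Rpoly_congr (m m' : ℕ → ℕ) : ∀ k, (∀ j, 1 ≤ j → j ≤ k → m j = m' j) → Rpoly m k = Rpoly m' k
  | 0, _ => rfl
  | 1, h => by rw [Rpoly, Rpoly, h 1 le_rfl le_rfl]
  | (i+2), h => by
      rw [Rpoly, Rpoly, h (i+2) (by omega) le_rfl,
        Rpoly_congr m m' (i+1) (fun j h1 h2 => h j h1 (by omega))]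

lemma Rpoly_step (q : ℤ[X]) (hq : q.Monic) (h0 : q.coeff 0 = 0)
    (M : ℕ) (hM : 1 ≤ M) (u : ℤ[X]) (hu : u = 1 ∨ u = -1) :
    (X ^ M * (X - 1) * q + u * (2 * X) * q.reverse).Monic ∧
    (X ^ M * (X - 1) * q + u * (2 * X) * q.reverse).natDegree = M + 1 + q.natDegree ∧
    (X ^ M * (X - 1) * q + u * (2 * X) * q.reverse).coeff 0 = 0 ∧
    ((X ^ M * (X - 1) * q + u * (2 * X) * q.reverse).coeff 1 = 2 ∨
     (X ^ M * (X - 1) * q + u * (2 * X) * q.reverse).coeff 1 = -2) := by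
  have h1 : (X - 1 : ℤ[X]).Monic := by simpa using monic_X_sub_C (1 : ℤ)
  have h1d : (X - 1 : ℤ[X]).natDegree = 1 := by simpa using natDegree_X_sub_C (1 : ℤ)
  have hA : (X ^ M * (X - 1) * q : ℤ[X]).Monic := ((monic_X_pow M).mul h1).mul hq
  have hAdeg : (X ^ M * (X - 1) * q : ℤ[X]).natDegree = M + 1 + q.natDegree := by
    rw [((monic_X_pow M).mul h1).natDegree_mul hq, (monic_X_pow M).natDegree_mul h1,
      natDegree_X_pow, h1d]
  have hBdeg : (u * (2 * X) * q.reverse).natDegree ≤ 1 + q.natDegree := by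
    calc (u * (2 * X) * q.reverse).natDegree
        ≤ (u * (2 * X)).natDegree + q.reverse.natDegree := natDegree_mul_le
      _ ≤ 1 + q.natDegree := by
          refine add_le_add ?_ (reverse_natDegree_le q)
          rcases hu with h | h <;> subst h <;>
            refine natDegree_mul_le.trans ?_ <;>
            simp [natDegree_X]
  have hlt : (u * (2 * X) * q.reverse).degree < (X ^ M * (X - 1) * q : ℤ[X]).degree := by
    calc (u * (2 * X) * q.reverse).degree ≤ ((1 + q.natDegree : ℕ) : WithBot ℕ) :=
          (degree_le_natDegree).trans (by exact_mod_cast hBdeg)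
      _ < ((M + 1 + q.natDegree : ℕ) : WithBot ℕ) := by exact_mod_cast (by omega : 1 + q.natDegree < M + 1 + q.natDegree)
      _ = (X ^ M * (X - 1) * q : ℤ[X]).degree := by rw [degree_eq_natDegree hA.ne_zero, hAdeg]
  refine ⟨hA.add_of_left hlt, ?_, ?_, ?_⟩
  · rw [natDegree_add_eq_left_of_degree_lt hlt, hAdeg]
  · have : (X ^ M * (X - 1) * q : ℤ[X]).coeff 0 = 0 := by
      rw [mul_coeff_zero, h0, mul_zero]
    have hB0 : (u * (2 * X) * q.reverse).coeff 0 = 0 := by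
      rw [mul_coeff_zero, mul_coeff_zero]
      simp
    rw [coeff_add, this, hB0, add_zero]
  · -- coeff 1
    have hA1 : (X ^ M * (X - 1) * q : ℤ[X]).coeff 1 = 0 := by
      have hre : (X ^ M * (X - 1) * q : ℤ[X]) = ((X - 1) * q) * X ^ M := by ring
      rw [hre, coeff_mul_X_pow']
      rcases Nat.lt_or_ge 1 M with h | h
      · simp [Nat.not_le.mpr h]
      · have hM1 : M = 1 := le_antisymm h hM
        subst hM1
        simp [mul_coeff_zero, h0]
    have hB1 : (u * (2 * X) * q.reverse).coeff 1 = 2 ∨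
        (u * (2 * X) * q.reverse).coeff 1 = -2 := by
      have hXr : ((X : ℤ[X]) * q.reverse).coeff 1 = 1 := by
        rw [coeff_X_mul, coeff_zero_reverse, hq.leadingCoeff]
      rcases hu with h | h <;> subst h
      · left
        have : ((1 : ℤ[X]) * (2 * X) * q.reverse) = (2 : ℤ[X]) * (X * q.reverse) := by ring
        rw [this]
        have h2 : (2 : ℤ[X]) = C 2 := by simp
        rw [h2, coeff_C_mul, hXr, mul_one]
      · right
        have : ((-1 : ℤ[X]) * (2 * X) * q.reverse) = C (-2) * (X * q.reverse) := by
          simp; ring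
        rw [this, coeff_C_mul, hXr, mul_one]
    rw [coeff_add, hA1, zero_add]
    exact hB1

lemma Rpoly_struct (m : ℕ → ℕ) : ∀ k, 1 ≤ k → (∀ j, 1 ≤ j → j ≤ k → 1 ≤ m j) →
    (Rpoly m k).Monic ∧ k + 2 ≤ (Rpoly m k).natDegree ∧ (Rpoly m k).coeff 0 = 0 ∧
    ((Rpoly m k).coeff 1 = 2 ∨ (Rpoly m k).coeff 1 = -2)
  | 0, h, _ => absurd h (by omega)
  | 1, _, hm => by
      rw [Rpoly]
      have hm1 : 1 ≤ m 1 := hm 1 le_rfl le_rfl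
      have h1 : (X - 1 : ℤ[X]).Monic := by simpa using monic_X_sub_C (1 : ℤ)
      have hA : (X ^ (m 1 + 1) * (X - 1) : ℤ[X]).Monic := (monic_X_pow _).mul h1
      have hAdeg : (X ^ (m 1 + 1) * (X - 1) : ℤ[X]).natDegree = m 1 + 2 := by
        have : (X - 1 : ℤ[X]).natDegree = 1 := by simpa using natDegree_X_sub_C (1 : ℤ)
        rw [(monic_X_pow _).natDegree_mul h1, natDegree_X_pow, this]
      have hlt : (-(2 * X) : ℤ[X]).degree < (X ^ (m 1 + 1) * (X - 1) : ℤ[X]).degree := by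
        calc (-(2 * X) : ℤ[X]).degree ≤ ((1 : ℕ) : WithBot ℕ) := by
              rw [degree_neg]
              exact (degree_le_natDegree).trans (by
                exact_mod_cast natDegree_mul_le.trans (by simp [natDegree_X]))
          _ < ((m 1 + 2 : ℕ) : WithBot ℕ) := by exact_mod_cast (by omega : 1 < m 1 + 2)
          _ = (X ^ (m 1 + 1) * (X - 1) : ℤ[X]).degree := by
              rw [degree_eq_natDegree hA.ne_zero, hAdeg]
      have he : (X ^ (m 1 + 1) * (X - 1) - 2 * X : ℤ[X])
          = X ^ (m 1 + 1) * (X - 1) + -(2 * X) := by ring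
      rw [he]
      refine ⟨hA.add_of_left hlt, ?_, ?_, ?_⟩
      · rw [natDegree_add_eq_left_of_degree_lt hlt, hAdeg]; omega
      · rw [coeff_add, mul_coeff_zero, coeff_X_pow]
        simp
      · right
        have hA1 : (X ^ (m 1 + 1) * (X - 1) : ℤ[X]).coeff 1 = 0 := by
          have hre : (X ^ (m 1 + 1) * (X - 1) : ℤ[X]) = (X - 1) * X ^ (m 1 + 1) := by ring
          rw [hre, coeff_mul_X_pow']
          simp [Nat.not_le.mpr (by omega : 1 < m 1 + 1)]
        rw [coeff_add, hA1, zero_add, coeff_neg]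
        have : ((2 : ℤ[X]) * X).coeff 1 = 2 := by
          rw [(by simp : (2 : ℤ[X]) = C 2), coeff_C_mul, coeff_X_one, mul_one]
        rw [this]
  | (k+2), _, hm => by
      obtain ⟨h1, h2, h3, h4⟩ := Rpoly_struct m (k+1) (by omega)
        (fun j hj1 hj2 => hm j hj1 (by omega))
      rw [Rpoly]
      have hu : ((-1 : ℤ[X]) ^ (k + 2) = 1 ∨ (-1 : ℤ[X]) ^ (k + 2) = -1) := by
        rcases Nat.even_or_odd (k+2) with h | h
        · exact Or.inl h.neg_one_pow
        · exact Or.inr h.neg_one_pow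
      have hstep := Rpoly_step _ h1 h3 (m (k+2)) (hm (k+2) (by omega) le_rfl) _ hu
      exact ⟨hstep.1, by rw [hstep.2.1]; omega, hstep.2.2⟩



-- multiset product lower bound
lemma ms_prod_lower (z : ℂ) (c : ℝ) (hc : 0 ≤ c) :
    ∀ s : Multiset ℂ, (∀ ρ ∈ s, c ≤ Complex.abs (z - ρ)) →
      c ^ Multiset.card s ≤ (s.map fun ρ => Complex.abs (z - ρ)).prod := by
  refine Multiset.induction (by simp) ?_
  intro a s ih h
  simp only [Multiset.map_cons, Multiset.prod_cons, Multiset.card_cons, pow_succ]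
  have h1 := h a (Multiset.mem_cons_self a s)
  have h2 := ih fun ρ hρ => h ρ (Multiset.mem_cons_of_mem hρ)
  calc c ^ Multiset.card s * c ≤ (s.map fun ρ => Complex.abs (z - ρ)).prod * Complex.abs (z - a) := by
        exact mul_le_mul h2 h1 hc (Multiset.prod_nonneg (by
          intro x hx
          obtain ⟨ρ, _, rfl⟩ := Multiset.mem_map.mp hx
          exact AbsoluteValue.nonneg _ _))
    _ = Complex.abs (z - a) * (s.map fun ρ => Complex.abs (z - ρ)).prod := by ring

-- multiset: all ≤ 1 gives prod ≤ 1
lemma ms_prod_le_one : ∀ s : Multiset ℝ, (∀ x ∈ s, 0 ≤ x) → (∀ x ∈ s, x ≤ 1) → s.prod ≤ 1 := by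
  refine Multiset.induction (by simp) ?_
  intro a s ih h0 h1
  rw [Multiset.prod_cons]
  have := mul_le_mul (h1 a (Multiset.mem_cons_self a s))
    (ih (fun x hx => h0 x (Multiset.mem_cons_of_mem hx)) (fun x hx => h1 x (Multiset.mem_cons_of_mem hx)))
    (Multiset.prod_nonneg (fun x hx => h0 x (Multiset.mem_cons_of_mem hx)))
    zero_le_one
  simpa using this

-- eval bound
lemma eval_abs_le (p : ℂ[X]) (z : ℂ) (hz : 1 ≤ Complex.abs z) :
    Complex.abs (p.eval z) ≤
      (∑ k ∈ Finset.range (p.natDegree + 1), Complex.abs (p.coeff k)) * Complex.abs z ^ p.natDegree := by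
  rw [eval_eq_sum_range]
  calc Complex.abs (∑ k ∈ Finset.range (p.natDegree + 1), p.coeff k * z ^ k)
      ≤ ∑ k ∈ Finset.range (p.natDegree + 1), Complex.abs (p.coeff k * z ^ k) :=
        Complex.abs.sum_le _ _
    _ ≤ ∑ k ∈ Finset.range (p.natDegree + 1), Complex.abs (p.coeff k) * Complex.abs z ^ p.natDegree := by
        refine Finset.sum_le_sum fun k hk => ?_
        rw [map_mul, map_pow]
        refine mul_le_mul_of_nonneg_left ?_ (AbsoluteValue.nonneg _ _)
        exact pow_le_pow_right₀ hz (by simp at hk; omega)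
    _ = _ := by rw [Finset.sum_mul]

-- minimum modulus principle consequence
lemma min_modulus_sphere (g : ℂ → ℂ) (z₀ : ℂ) (δ : ℝ) (hδ : 0 < δ)
    (hg : DifferentiableOn ℂ g (closedBall z₀ δ))
    (hne : ∀ z ∈ closedBall z₀ δ, g z ≠ 0) :
    ∃ w ∈ sphere z₀ δ, Complex.abs (g w) ≤ Complex.abs (g z₀) := by
  have hsne : (sphere z₀ δ).Nonempty := NormedSpace.sphere_nonempty.mpr hδ.le
  obtain ⟨w, hw, hwmin⟩ := (isCompact_sphere z₀ δ).exists_isMinOn hsne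
    ((hg.continuousOn.mono sphere_subset_closedBall).norm)
  refine ⟨w, hw, ?_⟩
  have hwmin' : ∀ z ∈ sphere z₀ δ, ‖g w‖ ≤ ‖g z‖ := fun z hz => hwmin hz
  have hball : ∀ z ∈ closedBall z₀ δ, ‖(g z)⁻¹‖ ≤ ‖(g w)⁻¹‖ → True := fun _ _ _ => trivial
  have key : ‖(g z₀)⁻¹‖ ≤ ‖(g w)⁻¹‖ := by
    have hdiff : DiffContOnCl ℂ (fun z => (g z)⁻¹) (ball z₀ δ) := by
      refine DifferentiableOn.diffContOnCl ?_
      rw [closure_ball z₀ hδ.ne']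
      exact hg.inv hne
    refine Complex.norm_le_of_forall_mem_frontier_norm_le isBounded_ball hdiff ?_ ?_
    · intro z hz
      rw [frontier_ball z₀ hδ.ne'] at hz
      have hz' : z ∈ closedBall z₀ δ := sphere_subset_closedBall hz
      have : ‖g w‖ ≤ ‖g z‖ := hwmin' z hz
      rw [norm_inv, norm_inv]
      exact inv_anti₀ (norm_pos_iff.mpr (hne w (sphere_subset_closedBall hw))) this
    · rw [closure_ball z₀ hδ.ne']
      exact mem_closedBall_self hδ.le
  have hgw : 0 < ‖g w‖ := norm_pos_iff.mpr (hne w (sphere_subset_closedBall hw))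
  have hgz : 0 < ‖g z₀‖ := norm_pos_iff.mpr (hne z₀ (mem_closedBall_self hδ.le))
  simp only [norm_inv] at key
  have h2 : ‖g w‖ ≤ ‖g z₀‖ := by
    have := (inv_le_inv₀ hgz hgw).mp key
    exact this
  simpa [Complex.norm_eq_abs] using h2


lemma aeval_eq_eval_map (f : Polynomial ℤ) (z : ℂ) :
    aeval z f = (f.map (algebraMap ℤ ℂ)).eval z := by
  rw [aeval_def, eval_map]

lemma rootAbs_finite (f : Polynomial ℤ) (hf : f ≠ 0) :
    (Complex.abs '' {z : ℂ | Polynomial.aeval z f = 0}).Finite := by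
  have : {z : ℂ | Polynomial.aeval z f = 0} = f.rootSet ℂ := by
    ext z
    simp [Polynomial.mem_rootSet, hf]
  rw [this]
  exact (f.rootSet_finite ℂ).image _

lemma rootAbs_le_max (f : Polynomial ℤ) (hf : f ≠ 0) {z : ℂ} (hz : aeval z f = 0) :
    Complex.abs z ≤ maxRootAbs f :=
  le_csSup ((rootAbs_finite f hf).bddAbove) ⟨z, hz, rfl⟩

lemma exists_max_root (f : Polynomial ℤ) (hf : f ≠ 0) (hd : 0 < f.natDegree) :
    ∃ z : ℂ, aeval z f = 0 ∧ Complex.abs z = maxRootAbs f := by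
  have hmapdeg : 0 < (f.map (algebraMap ℤ ℂ)).degree := by
    rw [degree_map_eq_of_injective (algebraMap ℤ ℂ).injective_int]
    rw [degree_eq_natDegree hf]
    exact_mod_cast hd
  obtain ⟨z, hz⟩ := Complex.exists_root hmapdeg
  have hzz : aeval z f = 0 := by rw [aeval_eq_eval_map]; exact hz
  have hne : (Complex.abs '' {z : ℂ | Polynomial.aeval z f = 0}).Nonempty := ⟨_, z, hzz, rfl⟩
  have := hne.csSup_mem (rootAbs_finite f hf)
  obtain ⟨w, hw, hw2⟩ := this
  exact ⟨w, hw, hw2⟩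

lemma exists_root_abs_gt_one (f : Polynomial ℤ) (hmon : f.Monic) (h0 : f.coeff 0 = 0)
    (h1 : f.coeff 1 = 2 ∨ f.coeff 1 = -2) :
    ∃ z : ℂ, aeval z f = 0 ∧ 1 < Complex.abs z := by
  have hfx : f = f.divX * X := by
    conv_lhs => rw [← divX_mul_X_add f]
    rw [h0, map_zero, add_zero]
  have hdivmon : f.divX.Monic := by
    have : f.leadingCoeff = f.divX.leadingCoeff := by
      conv_lhs => rw [hfx]
      rw [leadingCoeff_mul_X]
    rw [Monic, ← this, hmon.leadingCoeff]
  set h := f.divX with hh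
  have hc0 : h.coeff 0 = 2 ∨ h.coeff 0 = -2 := by
    rw [hh, coeff_divX]
    exact h1
  set hc : Polynomial ℂ := h.map (algebraMap ℤ ℂ) with hhc
  have hcmon : hc.Monic := hdivmon.map _
  have hprod : hc = (hc.roots.map fun a => X - C a).prod :=
    (IsAlgClosed.splits hc).eq_prod_roots_of_monic hcmon
  have heval0 : Complex.abs (hc.eval 0) = 2 := by
    have : hc.eval 0 = hc.coeff 0 := (coeff_zero_eq_eval_zero hc).symm
    rw [this, hhc, coeff_map]
    rcases hc0 with h | h <;> rw [h] <;> simp [Complex.abs_two]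
  have habs : Complex.abs (hc.eval 0) = (hc.roots.map fun a => Complex.abs a).prod := by
    conv_lhs => rw [hprod]
    rw [eval_multiset_prod, Multiset.map_map, map_multiset_prod, Multiset.map_map]
    congr 1
    refine Multiset.map_congr rfl fun a _ => ?_
    simp
  by_contra hcon
  push_neg at hcon
  have hall : ∀ ρ ∈ hc.roots, Complex.abs ρ ≤ 1 := by
    intro ρ hρ
    have hρ0 : hc.eval ρ = 0 := (mem_roots'.mp hρ).2
    have : aeval ρ f = 0 := by
      rw [aeval_eq_eval_map]
      conv_lhs => rw [hfx]
      rw [Polynomial.map_mul, eval_mul, ← hhc, hρ0, zero_mul]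
    exact hcon ρ this
  have : (hc.roots.map fun a => Complex.abs a).prod ≤ 1 := by
    refine ms_prod_le_one _ ?_ ?_ <;> intro x hx <;>
      obtain ⟨ρ, hρ, rfl⟩ := Multiset.mem_map.mp hx
    · exact AbsoluteValue.nonneg _ _
    · exact hall ρ hρ
  rw [habs] at heval0
  linarith


set_option maxHeartbeats 2000000 in
lemma main_key (f : Polynomial ℤ) (hmon : f.Monic) (hd3 : 3 ≤ f.natDegree)
    (h0 : f.coeff 0 = 0) (h1 : f.coeff 1 = 2 ∨ f.coeff 1 = -2)
    (u : Polynomial ℤ) (hu : u = 1 ∨ u = -1) (ε : ℝ) (hε : 0 < ε) :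
    ∃ M : ℕ, ∀ n : ℕ, M ≤ n →
      |maxRootAbs (X ^ n * (X - 1) * f + u * (2 * X) * f.reverse) - maxRootAbs f| < ε := by
  have hfne : f ≠ 0 := hmon.ne_zero
  set d := f.natDegree with hd
  set fc : Polynomial ℂ := f.map (algebraMap ℤ ℂ) with hfc
  set rcm : Polynomial ℂ := f.reverse.map (algebraMap ℤ ℂ) with hrcm
  have hfcmon : fc.Monic := hmon.map _
  have hfcdeg : fc.natDegree = d := natDegree_map_eq_of_injective (algebraMap ℤ ℂ).injective_int f
  have hrcmdeg : rcm.natDegree ≤ d := by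
    rw [hrcm, natDegree_map_eq_of_injective (algebraMap ℤ ℂ).injective_int]
    exact reverse_natDegree_le f
  set lam := maxRootAbs f with hlam
  obtain ⟨z₀, hz₀root, hz₀abs⟩ := exists_max_root f hfne (by omega)
  have hlam1 : 1 < lam := by
    obtain ⟨z, hz, hz1⟩ := exists_root_abs_gt_one f hmon h0 h1
    exact lt_of_lt_of_le hz1 (rootAbs_le_max f hfne hz)
  -- the complex sign
  obtain ⟨s, hs, hsmap⟩ : ∃ s : ℂ, (s = 1 ∨ s = -1) ∧ u.map (algebraMap ℤ ℂ) = C s := by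
    rcases hu with h | h <;> subst h
    · exact ⟨1, Or.inl rfl, by simp⟩
    · exact ⟨-1, Or.inr rfl, by simp⟩
  have hsabs : Complex.abs s = 1 := by rcases hs with h | h <;> subst h <;> simp
  -- roots of fc
  have hfcsplit : fc = (fc.roots.map fun a => X - C a).prod :=
    (IsAlgClosed.splits fc).eq_prod_roots_of_monic hfcmon
  have hfccard : Multiset.card fc.roots = d := by
    rw [← hfcdeg]
    exact splits_iff_card_roots.mp (IsAlgClosed.splits fc)
  have hrootsle : ∀ ρ ∈ fc.roots, Complex.abs ρ ≤ lam := by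
    intro ρ hρ
    have : aeval ρ f = 0 := by rw [aeval_eq_eval_map]; exact (mem_roots'.mp hρ).2
    exact rootAbs_le_max f hfne this
  have hfceval : ∀ z : ℂ, Complex.abs (fc.eval z)
      = (fc.roots.map fun a => Complex.abs (z - a)).prod := by
    intro z
    conv_lhs => rw [hfcsplit]
    rw [eval_multiset_prod, Multiset.map_map, map_multiset_prod, Multiset.map_map]
    congr 1
    exact Multiset.map_congr rfl fun a _ => by simp
  -- coefficient bound for rcm
  set Sr : ℝ := ∑ k ∈ Finset.range (rcm.natDegree + 1), Complex.abs (rcm.coeff k) with hSrdef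
  have hSr0 : 0 ≤ Sr := Finset.sum_nonneg fun k _ => AbsoluteValue.nonneg _ _
  have hrcm_bound : ∀ z : ℂ, 1 ≤ Complex.abs z →
      Complex.abs (rcm.eval z) ≤ Sr * Complex.abs z ^ d := by
    intro z hz
    refine (eval_abs_le rcm z hz).trans ?_
    exact mul_le_mul_of_nonneg_left (pow_le_pow_right₀ hz hrcmdeg) hSr0
  -- the mapped polynomial identity
  have hmapid : ∀ n : ℕ, (X ^ n * (X - 1) * f + u * (2 * X) * f.reverse).map (algebraMap ℤ ℂ)
      = X ^ n * (X - 1) * fc + C s * (2 * X) * rcm := by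
    intro n
    rw [Polynomial.map_add, Polynomial.map_mul, Polynomial.map_mul, Polynomial.map_mul,
      Polynomial.map_mul, Polynomial.map_pow, Polynomial.map_X, Polynomial.map_sub,
      Polynomial.map_X, Polynomial.map_one, hsmap, Polynomial.map_mul, Polynomial.map_X,
      Polynomial.map_ofNat]
  set ε' : ℝ := min ε 1 / 2 with hε'def
  have hε'0 : 0 < ε' := by positivity
  have hε'ε : ε' ≤ ε / 2 := by
    rw [hε'def]; gcongr; exact min_le_left _ _
  set L : ℝ := lam + ε' with hLdef
  have hL1 : 1 < L := by simp only [hLdef]; linarith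
  have hL0 : 0 < L := by linarith
  -- ### Part 1: upper bound
  have hKpos : 0 < (L - 1) * ε' ^ d :=
    mul_pos (by linarith) (pow_pos hε'0 d)
  obtain ⟨N₁, hN₁⟩ : ∃ N₁ : ℕ, ∀ k ≥ N₁, 2 * Sr < L ^ k * ((L - 1) * ε' ^ d) := by
    have := (tendsto_pow_atTop_atTop_of_one_lt hL1).atTop_mul_const hKpos
    exact Filter.eventually_atTop.mp (this.eventually_gt_atTop (2 * Sr))
  have hupper : ∀ n : ℕ, N₁ + d + 1 ≤ n → ∀ z : ℂ,
      aeval z (X ^ n * (X - 1) * f + u * (2 * X) * f.reverse) = 0 → Complex.abs z < L := by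
    intro n hn z hzroot
    by_contra hge
    push_neg at hge
    set az := Complex.abs z with hazdef
    have haz1 : 1 < az := lt_of_lt_of_le hL1 hge
    have haz0 : (0:ℝ) < az := by linarith
    -- the absolute-value equation
    have heval : z ^ n * (z - 1) * fc.eval z + s * 2 * z * rcm.eval z = 0 := by
      rw [aeval_eq_eval_map, hmapid n] at hzroot
      simp only [eval_add, eval_mul, eval_pow, eval_sub, eval_X, eval_one, eval_C,
        eval_ofNat] at hzroot
      linear_combination hzroot
    have habs : az ^ n * Complex.abs (z - 1) * Complex.abs (fc.eval z)
        = 2 * az * Complex.abs (rcm.eval z) := by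
      have he2 : z ^ n * (z - 1) * fc.eval z = -(s * 2 * z * rcm.eval z) := by
        linear_combination heval
      have := congrArg Complex.abs he2
      rw [map_neg_eq_map] at this
      rw [map_mul, map_mul, map_pow] at this
      rw [map_mul, map_mul, map_mul] at this
      rw [← hazdef] at this
      rw [this, hsabs, one_mul, Complex.abs_two]
    -- lower bound on |fc.eval z|
    have hfzlow : ε' ^ d ≤ Complex.abs (fc.eval z) := by
      rw [hfceval z]
      have h1 : (az - lam) ^ Multiset.card fc.roots
          ≤ (fc.roots.map fun a => Complex.abs (z - a)).prod := by
        refine ms_prod_lower z (az - lam) (by simp only [hLdef] at hge; linarith) fc.roots ?_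
        intro ρ hρ
        have := hrootsle ρ hρ
        have h2 : az - Complex.abs ρ ≤ Complex.abs (z - ρ) := Complex.abs.le_sub z ρ
        linarith
      rw [hfccard] at h1
      refine le_trans ?_ h1
      refine pow_le_pow_left₀ hε'0.le ?_ d
      simp only [hLdef] at hge; linarith
    have hz1low : L - 1 ≤ Complex.abs (z - 1) := by
      have h2 : az - Complex.abs 1 ≤ Complex.abs (z - 1) := Complex.abs.le_sub z 1
      simp only [map_one] at h2
      linarith
    have hrzup : Complex.abs (rcm.eval z) ≤ Sr * az ^ d := hrcm_bound z haz1.le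
    -- combine
    have hcomb : az ^ n * ((L - 1) * ε' ^ d) ≤ 2 * Sr * az ^ (d + 1) := by
      calc az ^ n * ((L - 1) * ε' ^ d)
          ≤ az ^ n * (Complex.abs (z - 1) * Complex.abs (fc.eval z)) := by
            refine mul_le_mul_of_nonneg_left ?_ (by positivity)
            refine mul_le_mul hz1low hfzlow (by positivity) (AbsoluteValue.nonneg _ _)
        _ = az ^ n * Complex.abs (z - 1) * Complex.abs (fc.eval z) := by ring
        _ = 2 * az * Complex.abs (rcm.eval z) := habs
        _ ≤ 2 * az * (Sr * az ^ d) := by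
            refine mul_le_mul_of_nonneg_left hrzup (by positivity)
        _ = 2 * Sr * az ^ (d + 1) := by ring
    have hsplit : az ^ n = az ^ (n - d - 1) * az ^ (d + 1) := by
      rw [← pow_add]
      congr 1
      omega
    rw [hsplit] at hcomb
    have hfin : az ^ (n - d - 1) * ((L - 1) * ε' ^ d) ≤ 2 * Sr := by
      have hpow : (0:ℝ) < az ^ (d + 1) := by positivity
      nlinarith [hcomb]
    have hLle : L ^ (n - d - 1) * ((L - 1) * ε' ^ d) ≤ az ^ (n - d - 1) * ((L - 1) * ε' ^ d) := by
      refine mul_le_mul_of_nonneg_right (pow_le_pow_left₀ hL0.le hge _) hKpos.le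
    have := hN₁ (n - d - 1) (by omega)
    linarith
  -- ### Part 2: lower bound setup
  have hpfin : {z : ℂ | (z - 1) * fc.eval z = 0}.Finite := by
    have hne : ((X - 1) * fc : Polynomial ℂ) ≠ 0 := by
      have h1 : (X - 1 : Polynomial ℂ).Monic := by simpa using monic_X_sub_C (1 : ℂ)
      exact (h1.mul hfcmon).ne_zero
    have : {z : ℂ | (z - 1) * fc.eval z = 0} = ((X - 1) * fc : Polynomial ℂ).rootSet ℂ := by
      ext z
      simp [Polynomial.mem_rootSet, hne, eval_mul, sub_eq_zero]
    rw [this]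
    exact Polynomial.rootSet_finite _ _
  obtain ⟨δ₁, hδ₁0, hδ₁⟩ : ∃ δ₁ > 0, ∀ z ∈ ball z₀ δ₁,
      z ∈ ({z : ℂ | (z - 1) * fc.eval z = 0} \ {z₀})ᶜ := by
    have hopen : IsOpen (({z : ℂ | (z - 1) * fc.eval z = 0} \ {z₀})ᶜ) :=
      ((hpfin.subset Set.diff_subset).isClosed).isOpen_compl
    have hz₀mem : z₀ ∈ (({z : ℂ | (z - 1) * fc.eval z = 0} \ {z₀})ᶜ) := by
      simp
    obtain ⟨δ₁, hδ₁0, hδ₁⟩ := Metric.isOpen_iff.mp hopen z₀ hz₀mem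
    exact ⟨δ₁, hδ₁0, fun z hz => hδ₁ hz⟩
  set δ : ℝ := min (min (ε / 2) ((lam - 1) / 2)) (δ₁ / 2) with hδdef
  have hδ0 : 0 < δ := by
    refine lt_min (lt_min (by linarith) (by linarith)) (by linarith)
  have hδε : δ ≤ ε / 2 := (min_le_left _ _).trans (min_le_left _ _)
  have hδlam : δ ≤ (lam - 1) / 2 := (min_le_left _ _).trans (min_le_right _ _)
  have hδδ₁ : δ < δ₁ := lt_of_le_of_lt (min_le_right _ _) (by linarith)
  -- lower bound on |z| on the closed ball
  have hball_lb : ∀ z ∈ closedBall z₀ δ, (lam + 1) / 2 ≤ Complex.abs z := by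
    intro z hz
    have hdist : Complex.abs (z₀ - z) ≤ δ := by
      rw [← Complex.dist_eq_abs, dist_comm]
      exact mem_closedBall.mp hz
    have h2 : Complex.abs z₀ - Complex.abs z ≤ Complex.abs (z₀ - z) := Complex.abs.le_sub z₀ z
    rw [hz₀abs] at h2
    have : lam - δ ≤ Complex.abs z := by linarith
    linarith
  have hmid1 : 1 < (lam + 1) / 2 := by linarith
  have hball_ub : ∀ z ∈ closedBall z₀ δ, Complex.abs z ≤ lam + δ := by
    intro z hz
    have hdist : Complex.abs (z - z₀) ≤ δ := by
      rw [← Complex.dist_eq_abs]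
      exact mem_closedBall.mp hz
    have h2 : Complex.abs z - Complex.abs z₀ ≤ Complex.abs (z - z₀) := Complex.abs.le_sub z z₀
    rw [hz₀abs] at h2
    linarith
  have hball_ne : ∀ z ∈ closedBall z₀ δ, z ≠ 0 := by
    intro z hz h0'
    have := hball_lb z hz
    rw [h0'] at this
    simp at this
    linarith
  -- min of |p| on the sphere
  have hpcont : ContinuousOn (fun z : ℂ => Complex.abs ((z - 1) * fc.eval z)) (sphere z₀ δ) :=
    (Complex.continuous_abs.comp (((continuous_id.sub continuous_const).mul
      fc.continuous)) ).continuousOn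
  obtain ⟨w₀, hw₀mem, hw₀min⟩ := (isCompact_sphere z₀ δ).exists_isMinOn
    (NormedSpace.sphere_nonempty.mpr hδ0.le) hpcont
  set c : ℝ := Complex.abs ((w₀ - 1) * fc.eval w₀) with hcdef
  have hw₀min' : ∀ z ∈ sphere z₀ δ, c ≤ Complex.abs ((z - 1) * fc.eval z) :=
    fun z hz => hw₀min hz
  have hpsphere : ∀ z ∈ sphere z₀ δ, (z - 1) * fc.eval z ≠ 0 := by
    intro z hz hzero
    have hzmem : z ∈ ball z₀ δ₁ := by
      rw [mem_ball]
      have : dist z z₀ = δ := mem_sphere.mp hz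
      linarith
    have := hδ₁ z hzmem
    have hzne : z ≠ z₀ := by
      intro h
      have hd' : dist z z₀ = δ := mem_sphere.mp hz
      rw [h, dist_self] at hd'
      linarith
    simp only [Set.mem_compl_iff, Set.mem_diff, Set.mem_setOf_eq, Set.mem_singleton_iff,
      not_and, not_not] at this
    exact hzne (this hzero)
  have hc0 : 0 < c := by
    rw [hcdef]
    have := hpsphere w₀ hw₀mem
    exact AbsoluteValue.pos _ this
  -- ### Part 3: the perturbation bound
  set ρ₀ : ℝ := (lam + 1) / 2 with hρ₀def
  have hρ₀1 : 1 < ρ₀ := hmid1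
  have hρ₀0 : 0 < ρ₀ := by linarith
  set CB : ℝ := Sr * (lam + δ) ^ d with hCBdef
  have hCB0 : 0 ≤ CB := by
    have h : (0:ℝ) ≤ lam + δ := by linarith
    exact mul_nonneg hSr0 (pow_nonneg h d)
  have hrcmball : ∀ z ∈ closedBall z₀ δ, Complex.abs (rcm.eval z) ≤ CB := by
    intro z hz
    have h1 : 1 ≤ Complex.abs z := le_trans hmid1.le (hball_lb z hz)
    refine (hrcm_bound z h1).trans ?_
    rw [hCBdef]
    exact mul_le_mul_of_nonneg_left
      (pow_le_pow_left₀ (AbsoluteValue.nonneg _ _) (hball_ub z hz) d) hSr0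
  set K₂ : ℝ := 2 * CB * (lam + δ) with hK₂def
  have hK₂0 : 0 ≤ K₂ := by
    have h : (0:ℝ) ≤ lam + δ := by linarith
    exact mul_nonneg (mul_nonneg (by norm_num) hCB0) h
  set Bn : ℕ → ℝ := fun n => K₂ * (ρ₀⁻¹) ^ n with hBndef
  obtain ⟨N₂, hN₂⟩ : ∃ N₂ : ℕ, ∀ n ≥ N₂, Bn n < c / 2 := by
    have htend : Filter.Tendsto Bn Filter.atTop (nhds 0) := by
      have h1 : Filter.Tendsto (fun n : ℕ => (ρ₀⁻¹) ^ n) Filter.atTop (nhds 0) :=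
        tendsto_pow_atTop_nhds_zero_of_lt_one (by positivity) (inv_lt_one_of_one_lt₀ hρ₀1)
      have := h1.const_mul K₂
      simpa only [mul_zero] using this
    exact Filter.eventually_atTop.mp (htend.eventually_lt_const (half_pos hc0))
  have hfcz₀ : fc.eval z₀ = 0 := by
    rw [← aeval_eq_eval_map]
    exact hz₀root
  -- ### Main argument
  refine ⟨max (N₁ + d + 1) (max N₂ 1), fun n hn => ?_⟩
  set gn : Polynomial ℤ := X ^ n * (X - 1) * f + u * (2 * X) * f.reverse with hgndef
  have hgnmon : gn.Monic := (Rpoly_step f hmon h0 n (by omega) u hu).1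
  have hgnne : gn ≠ 0 := hgnmon.ne_zero
  set q : ℂ → ℂ := fun z => (z - 1) * fc.eval z + s * 2 * rcm.eval z * z * (z ^ n)⁻¹ with hqdef
  have hqdiffb : ∀ z ∈ closedBall z₀ δ,
      Complex.abs (q z - (z - 1) * fc.eval z) ≤ Bn n := by
    intro z hz
    have hzne := hball_ne z hz
    have hzlb := hball_lb z hz
    have hzub := hball_ub z hz
    have he : q z - (z - 1) * fc.eval z = s * 2 * rcm.eval z * z * (z ^ n)⁻¹ := by
      rw [hqdef]; ring
    rw [he]
    have habs2 : Complex.abs (s * 2 * rcm.eval z * z * (z ^ n)⁻¹)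
        = 2 * Complex.abs (rcm.eval z) * Complex.abs z * (Complex.abs z ^ n)⁻¹ := by
      rw [map_mul, map_mul, map_mul, map_inv₀, map_pow, map_mul, hsabs, Complex.abs_two,
        one_mul]
    rw [habs2, hBndef, hK₂def]
    have hinv : (Complex.abs z ^ n)⁻¹ ≤ (ρ₀ ^ n)⁻¹ := by
      refine inv_anti₀ (pow_pos hρ₀0 n) ?_
      exact pow_le_pow_left₀ hρ₀0.le hzlb n
    have h1 := hrcmball z hz
    have h2 : (0:ℝ) ≤ Complex.abs z := AbsoluteValue.nonneg _ _
    have hr0 : (0:ℝ) ≤ Complex.abs (rcm.eval z) := AbsoluteValue.nonneg _ _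
    have hld : (0:ℝ) ≤ lam + δ := le_trans h2 hzub
    have step1 : 2 * Complex.abs (rcm.eval z) * Complex.abs z ≤ 2 * CB * (lam + δ) :=
      mul_le_mul (by linarith) hzub h2 (by linarith)
    have step2 : 2 * Complex.abs (rcm.eval z) * Complex.abs z * (Complex.abs z ^ n)⁻¹
        ≤ 2 * CB * (lam + δ) * (ρ₀ ^ n)⁻¹ :=
      mul_le_mul step1 hinv (inv_nonneg.mpr (pow_nonneg h2 n))
        (mul_nonneg (by linarith) hld)
    calc 2 * Complex.abs (rcm.eval z) * Complex.abs z * (Complex.abs z ^ n)⁻¹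
        ≤ 2 * CB * (lam + δ) * (ρ₀ ^ n)⁻¹ := step2
        _ = 2 * CB * (lam + δ) * ρ₀⁻¹ ^ n := by rw [inv_pow]
  have hqdiff : DifferentiableOn ℂ q (closedBall z₀ δ) := by
    rw [hqdef]
    refine DifferentiableOn.add ?_ ?_
    · exact ((differentiable_id.sub (differentiable_const 1)).mul
        fc.differentiable).differentiableOn
    · refine DifferentiableOn.mul ?_ ?_
      · exact (((differentiable_const (s * 2)).mul
          rcm.differentiable).mul differentiable_id).differentiableOn
      · exact DifferentiableOn.inv (differentiable_pow n).differentiableOn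
          (fun z hz => pow_ne_zero n (hball_ne z hz))
  -- find a root of gn of large modulus
  have hroot : ∃ w : ℂ, aeval w gn = 0 ∧ lam - δ ≤ Complex.abs w := by
    by_cases hex : ∃ w ∈ closedBall z₀ δ, q w = 0
    · obtain ⟨w, hwmem, hwzero⟩ := hex
      have hwne := hball_ne w hwmem
      have hwn : (w : ℂ) ^ n ≠ 0 := pow_ne_zero n hwne
      have heq : aeval w gn = w ^ n * q w := by
        rw [aeval_eq_eval_map, hgndef, hmapid n]
        simp only [eval_add, eval_mul, eval_pow, eval_sub, eval_X, eval_one, eval_C,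
          eval_ofNat]
        rw [hqdef]
        field_simp
      refine ⟨w, by rw [heq, hwzero, mul_zero], ?_⟩
      have hdist : Complex.abs (z₀ - w) ≤ δ := by
        rw [← Complex.dist_eq_abs, dist_comm]
        exact mem_closedBall.mp hwmem
      have h2 : Complex.abs z₀ - Complex.abs w ≤ Complex.abs (z₀ - w) := Complex.abs.le_sub z₀ w
      rw [hz₀abs] at h2
      linarith
    · exfalso
      push_neg at hex
      obtain ⟨w, hwmem, hwle⟩ := min_modulus_sphere q z₀ δ hδ0 hqdiff hex
      have hBn := hN₂ n (by omega)
      have hz₀val : Complex.abs (q z₀) ≤ Bn n := by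
        have := hqdiffb z₀ (mem_closedBall_self hδ0.le)
        rw [hfcz₀, mul_zero, sub_zero] at this
        exact this
      have hwlow : c - Bn n ≤ Complex.abs (q w) := by
        have h1 := hqdiffb w (sphere_subset_closedBall hwmem)
        have h2 := hw₀min' w hwmem
        have h3 : Complex.abs ((w - 1) * fc.eval w) - Complex.abs (q w)
            ≤ Complex.abs ((w - 1) * fc.eval w - q w) := Complex.abs.le_sub _ _
        have h1' : Complex.abs ((w - 1) * fc.eval w - q w) ≤ Bn n := by
          rw [AbsoluteValue.map_sub]
          exact h1
        linarith
      linarith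
  obtain ⟨w, hwroot, hwlb⟩ := hroot
  -- conclusion
  have hub : maxRootAbs gn ≤ L := by
    rw [maxRootAbs]
    refine Real.sSup_le ?_ (by linarith)
    rintro x ⟨z, hz, rfl⟩
    exact (hupper n (le_trans (le_max_left _ _) hn) z hz).le
  have hlb : lam - δ ≤ maxRootAbs gn := le_trans hwlb (rootAbs_le_max gn hgnne hwroot)
  rw [abs_lt]
  constructor <;> simp only [hLdef] at hub <;> linarith


/-- For fixed `i ≥ 2` and `m_1, …, m_{i-1} ≥ 1`,
`λ(R_{(m_1,…,m_{i-1},m_i)}) → λ(R_{(m_1,…,m_{i-1})})` as `m_i → ∞`. -/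
theorem Rpoly_maxRootAbs_tendsto (i : ℕ) (hi : 2 ≤ i) (m : ℕ → ℕ)
    (hm : ∀ j, 1 ≤ j → j ≤ i - 1 → 1 ≤ m j) :
    ∀ ε : ℝ, 0 < ε → ∃ M : ℕ, ∀ n : ℕ, M ≤ n →
      |maxRootAbs (Rpoly (Function.update m i n) i)
        - maxRootAbs (Rpoly m (i - 1))| < ε := by
  intro ε hε
  obtain ⟨i', rfl⟩ : ∃ i', i = i' + 2 := ⟨i - 2, by omega⟩
  set f := Rpoly m (i' + 1) with hf
  obtain ⟨hmon, hdeg, h0, h1⟩ := Rpoly_struct m (i' + 1) (by omega)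
    (fun j hj1 hj2 => hm j hj1 (by omega))
  have hu : ((-1 : Polynomial ℤ) ^ (i' + 2) = 1 ∨ (-1 : Polynomial ℤ) ^ (i' + 2) = -1) := by
    rcases Nat.even_or_odd (i' + 2) with h | h
    · exact Or.inl h.neg_one_pow
    · exact Or.inr h.neg_one_pow
  obtain ⟨M, hM⟩ := main_key f hmon (by rw [hf]; omega) h0 h1 _ hu ε hε
  refine ⟨max M 1, fun n hn => ?_⟩
  have hgn : Rpoly (Function.update m (i' + 2) n) (i' + 2)
      = X ^ n * (X - 1) * f + (-1 : Polynomial ℤ) ^ (i' + 2) * (2 * X) * f.reverse := by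
    rw [Rpoly, Function.update_self,
      Rpoly_congr (Function.update m (i' + 2) n) m (i' + 1)
        (fun j hj1 hj2 => Function.update_of_ne (by omega) n m)]
  have hred : (i' + 2) - 1 = i' + 1 := rfl
  rw [hgn, hred, ← hf]
  exact hM n (le_trans (le_max_left _ _) hn)
end

section
/- The maximal absolute value of the complex roots of R_{(m_1)}(t) = t^{m_1+1}(t−1) − 2t tends to 1 as m_1 → ∞; that is, for every ε > 0 there exists an integer M such that for all integers m_1 ≥ M, every complex root z of t^{m_1+1}(t−1) − 2t satisfies |z| < 1 + ε, while R_{(m_1)} always has a real root strictly greater than 1. -/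
open Polynomial

/-- The maximal absolute value of the complex roots of
`R_{(m_1)}(t) = t^{m_1+1}(t-1) - 2t` tends to `1` as `m_1 → ∞`: for every `ε > 0`
all complex roots of `R_{(m_1)}` have absolute value `< 1 + ε` once `m_1` is large,
while `R_{(m_1)}` always has a real root strictly greater than `1`. -/
theorem Rpoly_base_roots_tendsto_one :
    (∀ ε : ℝ, 0 < ε → ∃ M : ℕ, ∀ m₁ : ℕ, M ≤ m₁ →
      ∀ z : ℂ, Polynomial.aeval z ((X : Polynomial ℤ) ^ (m₁ + 1) * (X - 1) - 2 * X) = 0 →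
        ‖z‖ < 1 + ε) ∧
    (∀ m₁ : ℕ, 1 ≤ m₁ → ∃ x : ℝ, 1 < x ∧
      Polynomial.aeval x ((X : Polynomial ℤ) ^ (m₁ + 1) * (X - 1) - 2 * X) = 0) := by
  constructor
  · intro ε hε
    obtain ⟨M, hM⟩ := pow_unbounded_of_one_lt (2 / ε) (by linarith : (1:ℝ) < 1 + ε)
    refine ⟨M, fun m hm z hz => ?_⟩
    by_contra hlt
    push_neg at hlt
    have hz0 : z ≠ 0 := by
      intro h
      rw [h] at hlt
      simp at hlt
      linarith
    simp only [map_sub, map_mul, map_pow, aeval_X, map_one, map_ofNat] at hz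
    -- z^(m+1) * (z - 1) - 2 * z = 0
    have key : z ^ m * (z - 1) = 2 := by
      have h1 : z * (z ^ m * (z - 1)) = z * 2 := by ring_nf; ring_nf at hz; linear_combination hz
      exact mul_left_cancel₀ hz0 h1
    have habs : ‖z‖ ^ m * ‖z - 1‖ = 2 := by
      have := congrArg norm key
      simpa [norm_mul, norm_pow] using this
    have h1 : ε ≤ ‖z - 1‖ := by
      have := norm_sub_norm_le z 1
      simp at this
      linarith
    have h2 : (1 + ε) ^ M ≤ (1 + ε) ^ m := pow_le_pow_right₀ (by linarith) hm
    have h3 : (1 + ε) ^ m ≤ ‖z‖ ^ m :=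
      pow_le_pow_left₀ (by linarith) hlt m
    have hde : 2 / ε * ε = 2 := div_mul_cancel₀ _ (ne_of_gt hε)
    have ha : (1 + ε) ^ M * ε ≤ ‖z‖ ^ m * ‖z - 1‖ :=
      mul_le_mul (h2.trans h3) h1 hε.le (by positivity)
    have hb : 2 / ε * ε < (1 + ε) ^ M * ε := mul_lt_mul_of_pos_right hM hε
    linarith
  · intro m hm
    set f : ℝ → ℝ := fun x => x ^ (m + 1) * (x - 1) - 2 * x with hf
    have hcont : ContinuousOn f (Set.Icc 1 2) := (by fun_prop : Continuous f).continuousOn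
    have hf1 : f 1 = -2 := by simp [hf]
    have hf2 : (0:ℝ) ≤ f 2 := by
      have : (4:ℝ) ≤ 2 ^ (m + 1) := by
        calc (4:ℝ) = 2 ^ 2 := by norm_num
        _ ≤ 2 ^ (m + 1) := pow_le_pow_right₀ (by norm_num) (by omega)
      simp [hf]; linarith
    have : (0:ℝ) ∈ f '' Set.Icc 1 2 := by
      apply intermediate_value_Icc (by norm_num) hcont
      constructor <;> [linarith [hf1]; exact hf2]
    obtain ⟨x, hx, hfx⟩ := this
    have hx1 : 1 < x := by
      rcases lt_or_eq_of_le hx.1 with h | h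
      · exact h
      · exfalso; rw [← h] at hfx; rw [hf1] at hfx; linarith
    refine ⟨x, hx1, ?_⟩
    simp only [map_sub, map_mul, map_pow, aeval_X, map_one, map_ofNat]
    simpa [hf] using hfx
end
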